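/- Let X be a Banach space over ℝ such that the unit sphere S_X = {x ∈ X : ‖x‖ = 1} is Lindelöf in the relative weak topology σ(X, X*). Then X has the countable separation property (CSP). -/

import Mathlib

open Set Cardinal Pointwise

/-- A Banach space `X` over `ℝ` has the countable separation property (CSP) if every set of
continuous linear functionals separating the points of `X` has a countable separating subset. -/
def HasCSP (X : Type*) [NormedAddCommGroup X] [NormedSpace ℝ X] : Prop :=
  ∀ F : Set (X →L[ℝ] ℝ),
    (∀ x : X, x ≠ 0 → ∃ f ∈ F, f x ≠ 0) →
    ∃ F₀ : Set (X →L[ℝ] ℝ), F₀ ⊆ F ∧ F₀.Countable ∧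
      ∀ x : X, x ≠ 0 → ∃ f ∈ F₀, f x ≠ 0

/-- If the unit sphere of a Banach space is Lindelöf in the weak topology, then the space
has CSP. -/
theorem hasCSP_of_weakLindelof_sphere (X : Type*) [NormedAddCommGroup X] [NormedSpace ℝ X]
    [CompleteSpace X]
    (hL : IsLindelof ((toWeakSpace ℝ X) '' {x : X | ‖x‖ = 1})) : HasCSP X := by
  intro F hF
  -- open sets in the weak topology
  set U : F → Set (WeakSpace ℝ X) :=
    fun f => {y | f.1 ((toWeakSpace ℝ X).symm y) ≠ 0} with hU
  have hUopen : ∀ f : F, IsOpen (U f) := by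
    intro f
    have hcont : Continuous fun y : WeakSpace ℝ X => f.1 ((toWeakSpace ℝ X).symm y) :=
      WeakBilin.eval_continuous ((topDualPairing ℝ X).flip) f.1
    exact isOpen_compl_iff.mpr (isClosed_singleton.preimage hcont)
  have hcover : (toWeakSpace ℝ X) '' {x : X | ‖x‖ = 1} ⊆ ⋃ f, U f := by
    rintro y ⟨x, hx, rfl⟩
    have hx0 : x ≠ 0 := by
      rintro rfl; simp at hx
    obtain ⟨f, hfF, hfx⟩ := hF x hx0
    exact mem_iUnion.mpr ⟨⟨f, hfF⟩, by simpa [hU] using hfx⟩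
  obtain ⟨t, htc, hts⟩ := hL.elim_countable_subcover U hUopen hcover
  refine ⟨Subtype.val '' t, by rintro _ ⟨f, _, rfl⟩; exact f.2, htc.image _, ?_⟩
  intro x hx0
  have hxs : ‖(‖x‖⁻¹ • x : X)‖ = 1 := by
    rw [norm_smul, norm_inv, norm_norm,
      inv_mul_cancel₀ (norm_ne_zero_iff.mpr hx0)]
  have : (toWeakSpace ℝ X) ((‖x‖⁻¹ : ℝ) • x) ∈ ⋃ f ∈ t, U f :=
    hts ⟨_, hxs, rfl⟩
  obtain ⟨f, hft, hfx⟩ := mem_iUnion₂.mp this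
  refine ⟨f.1, ⟨f, hft, rfl⟩, ?_⟩
  have : f.1 ((‖x‖⁻¹ : ℝ) • x) ≠ 0 := by
    have h2 : f.1 ((toWeakSpace ℝ X).symm ((toWeakSpace ℝ X) ((‖x‖⁻¹ : ℝ) • x))) ≠ 0 := hfx
    simpa using h2
  intro h
  apply this
  rw [map_smul, h, smul_zero]
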